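/- arXiv:math/0410177 — 4 statements merged into one kernel-verified Lean document; each statement's English description precedes it below -/
import Mathlib

section
/- For all real α > 0 and all integers n ≥ 3 and 1 ≤ i ≤ n, one has |((ln i)/(ln n))^α − 1| ≤ ((2 ∨ α)/(ln n)) · |ln(i/n)|. -/
lemma aux_pow_ineq (α x : ℝ) (hα : 0 < α) (hx0 : 0 ≤ x) (hx1 : x ≤ 1) :
    1 - x ^ α ≤ max 2 α * (1 - x) := by
  rcases le_or_gt 1 α with h | h
  · have hb := one_add_mul_self_le_rpow_one_add (by linarith : (-1:ℝ) ≤ x - 1) h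
    rw [show 1 + (x - 1) = x by ring] at hb
    have hmax : α * (1 - x) ≤ max 2 α * (1 - x) :=
      mul_le_mul_of_nonneg_right (le_max_right _ _) (by linarith)
    nlinarith
  · have hx : x ≤ x ^ α := by
      rcases eq_or_lt_of_le hx0 with h0 | h0
      · rw [← h0, Real.zero_rpow hα.ne']
      · calc x = x ^ (1:ℝ) := (Real.rpow_one x).symm
          _ ≤ x ^ α := Real.rpow_le_rpow_of_exponent_ge h0 hx1 h.le
    have hmax : 2 * (1 - x) ≤ max 2 α * (1 - x) :=
      mul_le_mul_of_nonneg_right (le_max_left _ _) (by linarith)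
    nlinarith

theorem stmt0 (α : ℝ) (hα : 0 < α) (n i : ℕ) (hn : 3 ≤ n) (hi1 : 1 ≤ i) (hin : i ≤ n) :
    |(Real.log i / Real.log n) ^ α - 1| ≤
      (max 2 α / Real.log n) * |Real.log ((i : ℝ) / n)| := by
  have hn1 : (1:ℝ) < n := by exact_mod_cast lt_of_lt_of_le (by norm_num) hn
  have hi0 : (0:ℝ) < i := by exact_mod_cast hi1
  have hn0 : (0:ℝ) < n := by linarith
  have hL : 0 < Real.log n := Real.log_pos hn1
  have hl0 : 0 ≤ Real.log i := Real.log_nonneg (by exact_mod_cast hi1)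
  have hlL : Real.log i ≤ Real.log n := Real.log_le_log hi0 (by exact_mod_cast hin)
  set L := Real.log n
  set l := Real.log i
  have hx0 : 0 ≤ l / L := div_nonneg hl0 hL.le
  have hx1 : l / L ≤ 1 := (div_le_one hL).mpr hlL
  have hxa : (l / L) ^ α ≤ 1 := Real.rpow_le_one hx0 hx1 hα.le
  have hlog : Real.log ((i : ℝ) / n) = l - L := Real.log_div hi0.ne' hn0.ne'
  rw [hlog, abs_of_nonpos (by linarith : (l/L)^α - 1 ≤ 0),
      abs_of_nonpos (by linarith : l - L ≤ 0)]
  have key := aux_pow_ineq α (l / L) hα hx0 hx1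
  have : max 2 α * (1 - l / L) = max 2 α / L * -(l - L) := by
    field_simp
    ring
  linarith [this ▸ key]
end

section
/- Let (I_n) be random variables with I_n ∈ {0,…,n}, P(I_n = n) < 1 for all sufficiently large n, and limsup_{n→∞} E ln((I_n ∨ 1)/n) < −ε for some ε > 0. Let γ > 0 and let (d_n)_{n≥0}, (r_n)_{n≥n₀} be nonnegative sequences satisfying d_n ≤ E[ (L_δ(I_n)/L_δ(n))^γ · d_{I_n} ] + r_n for all n ≥ n₀ ≥ 2. Then for every β with 1 < β < 1 + γ there exists δ > 0 such that: if r_n = O(1/(ln n)^β) then d_n = O(1/(ln n)^{β−1}). -/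
open MeasureTheory ProbabilityTheory Filter Asymptotics

/-- `L_δ(n) = ln(n ∨ 1) + δ·1_{n ∈ {0,1}}`. -/
noncomputable def Ldelta (δ : ℝ) (n : ℕ) : ℝ :=
  Real.log (max n 1) + if n ≤ 1 then δ else 0

lemma key_pow {x p : ℝ} (hx0 : 0 ≤ x) (hx1 : x ≤ 1) (hp : 0 < p) :
    x ^ p ≤ 1 - min 1 p + min 1 p * x := by
  rcases le_or_gt p 1 with h | h
  · have hb := rpow_one_add_le_one_add_mul_self (s := x - 1) (by linarith) hp.le h
    have h1 : 1 + (x - 1) = x := by ring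
    rw [h1] at hb
    rw [min_eq_right h]
    linarith
  · rw [min_eq_left h.le]
    rcases eq_or_lt_of_le hx0 with h0 | h0
    · rw [← h0, Real.zero_rpow hp.ne']; linarith
    · have hxx : x ^ p ≤ x ^ (1:ℝ) := Real.rpow_le_rpow_of_exponent_ge h0 hx1 h.le
      rw [Real.rpow_one] at hxx; linarith

set_option maxHeartbeats 2000000 in
theorem stmt9 {Ω : Type*} [MeasureSpace Ω] [IsProbabilityMeasure (ℙ : Measure Ω)]
    (I : ℕ → Ω → ℕ) (hmeas : ∀ n, Measurable (I n)) (hle : ∀ n ω, I n ω ≤ n)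
    (hPn : ∀ᶠ n in atTop, ℙ {ω | I n ω = n} < 1)
    (ε : ℝ) (hε : 0 < ε)
    (hlimsup : limsup (fun n => ∫ ω, Real.log ((max (I n ω) 1 : ℝ) / n)) atTop < -ε)
    (γ : ℝ) (hγ : 0 < γ) (n₀ : ℕ) (hn₀ : 2 ≤ n₀)
    (d r : ℕ → ℝ) (hd : ∀ n, 0 ≤ d n) (hr : ∀ n, 0 ≤ r n) :
    ∀ β : ℝ, 1 < β → β < 1 + γ → ∃ δ : ℝ, 0 < δ ∧
      ((∀ n, n₀ ≤ n →
          d n ≤ (∫ ω, (Ldelta δ (I n ω) / Ldelta δ n) ^ γ * d (I n ω)) + r n) →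
        (r =O[atTop] fun n => 1 / Real.log n ^ β) →
        (d =O[atTop] fun n => 1 / Real.log n ^ (β - 1))) := by
  intro β hβ1 hβ2
  refine ⟨ε/2, by positivity, ?_⟩
  intro Hrec hO
  set γ' := γ - (β - 1) with hγ'def
  have hγ'pos : 0 < γ' := by simp only [hγ'def]; linarith
  set m := min 1 γ' with hmdef
  have hm0 : 0 < m := lt_min one_pos hγ'pos
  have hm1 : m ≤ 1 := min_le_left _ _
  set Lf : ℕ → ℝ := Ldelta (ε/2) with hLfdef
  -- integrability helper
  have hint : ∀ (g : ℕ → ℝ) (n : ℕ), Integrable (fun ω => g (I n ω)) := by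
    intro g n
    refine (integrable_const (∑ k ∈ Finset.range (n+1), |g k|)).mono'
      ((measurable_from_top.comp (hmeas n)).aestronglyMeasurable) ?_
    filter_upwards with ω
    rw [Real.norm_eq_abs]
    exact Finset.single_le_sum (fun k _ => abs_nonneg (g k))
      (Finset.mem_range.mpr (Nat.lt_succ_of_le (hle n ω)))
  -- positivity of Lf
  have hLpos : ∀ k, 0 < Lf k := by
    intro k
    simp only [hLfdef, Ldelta]
    rcases le_or_gt k 1 with hk | hk
    · have h1 : max (k:ℝ) 1 = 1 := max_eq_right (by exact_mod_cast hk)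
      rw [if_pos hk, h1, Real.log_one]; linarith
    · have h2 : (1:ℝ) < k := by exact_mod_cast hk
      have h1 : max (k:ℝ) 1 = k := max_eq_left (by linarith)
      rw [if_neg (by omega), h1, add_zero]
      exact Real.log_pos h2
  have hLn : ∀ n : ℕ, 2 ≤ n → Lf n = Real.log n := by
    intro n hn
    have h2 : (1:ℝ) ≤ n := by exact_mod_cast Nat.one_le_of_lt hn
    simp only [hLfdef, Ldelta]
    rw [if_neg (by omega), max_eq_left h2, add_zero]
  -- thresholds
  have hbd : IsBoundedUnder (· ≤ ·) atTop
      (fun n => ∫ ω, Real.log ((max (I n ω) 1 : ℝ) / n)) := by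
    refine isBoundedUnder_of ⟨0, fun n => integral_nonpos fun ω => ?_⟩
    rcases Nat.eq_zero_or_pos n with h0 | h0
    · simp [h0]
    · have hn1 : (1:ℝ) ≤ n := by exact_mod_cast h0
      refine Real.log_nonpos (by positivity) ?_
      rw [div_le_one (by linarith)]
      exact max_le (by exact_mod_cast hle n ω) hn1
  obtain ⟨N₁, hN₁⟩ := eventually_atTop.mp
    ((eventually_lt_of_limsup_lt hlimsup hbd).mono fun n h => h.le)
  obtain ⟨N₂, hN₂⟩ := eventually_atTop.mp hPn
  obtain ⟨c, hc⟩ := isBigO_iff.mp hO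
  obtain ⟨N₃, hN₃⟩ := eventually_atTop.mp hc
  set N : ℕ := n₀ + N₁ + N₂ + N₃ + ⌈Real.exp (ε/2)⌉₊ + 2 with hNdef
  set C : ℝ := 2*|c|/(m*ε) + ∑ k ∈ Finset.range N, d k * Lf k ^ (β-1) with hCdef
  have hsum0 : (0:ℝ) ≤ ∑ k ∈ Finset.range N, d k * Lf k ^ (β-1) :=
    Finset.sum_nonneg fun k _ => mul_nonneg (hd k) (Real.rpow_nonneg (hLpos k).le _)
  have hC1 : 2*|c|/(m*ε) ≤ C := by simp only [hCdef]; linarith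
  have hC0 : 0 ≤ C := le_trans (by positivity) hC1
  have hC2 : ∀ k, k < N → d k * Lf k ^ (β-1) ≤ C := by
    intro k hk
    have h1 : d k * Lf k ^ (β-1) ≤ ∑ j ∈ Finset.range N, d j * Lf j ^ (β-1) :=
      Finset.single_le_sum (fun j _ => mul_nonneg (hd j) (Real.rpow_nonneg (hLpos j).le _))
        (Finset.mem_range.mpr hk)
    have h2 : (0:ℝ) ≤ 2*|c|/(m*ε) := by positivity
    simp only [hCdef]; linarith
  clear_value C
  -- main claim
  have main : ∀ n, d n ≤ C / Lf n ^ (β-1) := by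
    intro n
    induction n using Nat.strong_induction_on with
    | _ n IH =>
    have hLfn : (0:ℝ) < Lf n ^ (β-1) := Real.rpow_pos_of_pos (hLpos n) _
    rcases lt_or_ge n N with hn | hn
    · rw [le_div_iff₀ hLfn]; exact hC2 n hn
    · -- n ≥ N: the main recursion step
      have hn2 : 2 ≤ n := by omega
      have hnn₀ : n₀ ≤ n := by omega
      have hnN₁ : N₁ ≤ n := by omega
      have hnN₂ : N₂ ≤ n := by omega
      have hnN₃ : N₃ ≤ n := by omega
      have hlog : Lf n = Real.log n := hLn n hn2
      have hLnpos : 0 < Real.log n :=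
        Real.log_pos (by exact_mod_cast (by omega : 1 < n))
      have hδLn : ε/2 ≤ Real.log n := by
        rw [Real.le_log_iff_exp_le (by positivity)]
        have : (⌈Real.exp (ε/2)⌉₊ : ℕ) ≤ n := by omega
        exact le_trans (Nat.le_ceil _) (by exact_mod_cast this)
      have hLfnpos : 0 < Lf n := hLpos n
      -- the event A
      have hA : MeasurableSet {ω | I n ω = n} := hmeas n (measurableSet_singleton n)
      set p : ℝ := (ℙ {ω | I n ω = n}).toReal with hpdef
      have hp1 : p < 1 := by
        have h := hN₂ n hnN₂
        have := ENNReal.toReal_lt_toReal (measure_ne_top ℙ _) ENNReal.one_ne_top |>.mpr h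
        simpa using this
      have hp0 : 0 ≤ p := ENNReal.toReal_nonneg
      have hq : 0 < 1 - p := by linarith
      have hpc : (ℙ {ω | I n ω = n}ᶜ).toReal = 1 - p := by
        rw [prob_compl_eq_one_sub hA,
          ENNReal.toReal_sub_of_le prob_le_one ENNReal.one_ne_top, ENNReal.toReal_one]
      -- bound on E[Lf(I_n)]
      have hEL0 : ∫ ω, Real.log (max (↑(I n ω) : ℝ) 1) ≤ Real.log n - ε := by
        have h1 : ∫ ω, (Real.log (max (↑(I n ω) : ℝ) 1) - Real.log n) ≤ -ε := by
          have he : (fun ω => Real.log (max (↑(I n ω):ℝ) 1) - Real.log n)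
              = (fun ω => Real.log ((max (↑(I n ω):ℝ) 1) / ↑n)) := by
            funext ω
            rw [Real.log_div (by positivity) (by positivity)]
          rw [he]; exact hN₁ n hnN₁
        rw [integral_sub (hint (fun k => Real.log (max (k:ℝ) 1)) n) (integrable_const _),
          integral_const, probReal_univ, one_smul] at h1
        linarith
      have hEL : ∫ ω, Lf (I n ω) ≤ Real.log n - ε/2 := by
        have hmono : ∫ ω, Lf (I n ω)
            ≤ ∫ ω, (Real.log (max (↑(I n ω):ℝ) 1) + ε/2) := by
          refine integral_mono (hint Lf n)
            (hint (fun k => Real.log (max (k:ℝ) 1) + ε/2) n) fun ω => ?_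
          simp only [hLfdef, Ldelta]
          have : (if I n ω ≤ 1 then ε/2 else 0) ≤ ε/2 := by
            split_ifs <;> linarith
          linarith
        rw [integral_add (hint (fun k => Real.log (max (k:ℝ) 1)) n) (integrable_const _),
          integral_const, probReal_univ, one_smul] at hmono
        linarith
      -- split the main integral
      set B : ℝ := C / Lf n ^ (β-1) with hBdef
      have hB0 : 0 ≤ B := div_nonneg hC0 hLfn.le
      clear_value B
      have hsplit := (integral_add_compl hA
        (hint (fun k => (Lf k / Lf n) ^ γ * d k) n)).symm
      have hA1 : ∫ ω in {ω | I n ω = n}, (Lf (I n ω) / Lf n) ^ γ * d (I n ω) = p * d n := by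
        rw [setIntegral_congr_fun hA (g := fun _ => d n) ?_, setIntegral_const, smul_eq_mul, hpdef, measureReal_def]
        intro ω hω
        have hω' : I n ω = n := hω
        simp only [hω', div_self hLfnpos.ne', Real.one_rpow, one_mul]
      have hLA : ∫ ω in {ω | I n ω = n}, Lf (I n ω) = p * Lf n := by
        rw [setIntegral_congr_fun hA (g := fun _ => Lf n) ?_, setIntegral_const, smul_eq_mul, hpdef, measureReal_def]
        intro ω hω
        have hω' : I n ω = n := hω
        simp only [hω']
      have hLsplit := integral_add_compl hA (hint Lf n)
      set TLc : ℝ := ∫ ω in {ω | I n ω = n}ᶜ, Lf (I n ω) with hTLcdef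
      clear_value TLc
      have hTLc : TLc ≤ (1-p) * Lf n - ε/2 := by
        have h7 := hLsplit
        rw [hLA, hlog] at h7
        rw [hlog]
        linarith [hEL]
      -- pointwise bound on the complement
      have hptwise : ∀ ω ∈ {ω | I n ω = n}ᶜ,
          (Lf (I n ω) / Lf n) ^ γ * d (I n ω)
            ≤ B * ((1-m) + (m / Lf n) * Lf (I n ω)) := by
        intro ω hω
        set k := I n ω with hkdef
        have hkn : k < n := lt_of_le_of_ne (hle n ω) hω
        have hLk : 0 < Lf k := hLpos k
        have hLkn : Lf k ≤ Lf n := by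
          rw [hlog]
          simp only [hLfdef, Ldelta]
          rcases le_or_gt k 1 with hk1 | hk1
          · have h1 : max (k:ℝ) 1 = 1 := max_eq_right (by exact_mod_cast hk1)
            rw [if_pos hk1, h1, Real.log_one]; linarith
          · have h1 : max (k:ℝ) 1 = k := max_eq_left (by exact_mod_cast hk1.le)
            rw [if_neg (by omega), h1, add_zero]
            exact Real.log_le_log (by positivity) (by exact_mod_cast hkn.le)
        have hx0 : 0 ≤ Lf k / Lf n := by positivity
        have hx1 : Lf k / Lf n ≤ 1 := (div_le_one hLfnpos).mpr hLkn
        have step1 : (Lf k / Lf n) ^ γ * d k ≤ (Lf k / Lf n) ^ γ * (C / Lf k ^ (β-1)) :=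
          mul_le_mul_of_nonneg_left (IH k hkn) (Real.rpow_nonneg hx0 _)
        have step2 : (Lf k / Lf n) ^ γ * (C / Lf k ^ (β-1)) = B * (Lf k / Lf n) ^ γ' := by
          rw [hBdef, Real.div_rpow hLk.le hLfnpos.le, Real.div_rpow hLk.le hLfnpos.le]
          have e1 : Lf k ^ γ' = Lf k ^ γ / Lf k ^ (β-1) := by
            rw [← Real.rpow_sub hLk]
          have e2 : Lf n ^ γ' = Lf n ^ γ / Lf n ^ (β-1) := by
            rw [← Real.rpow_sub hLfnpos]
          rw [e1, e2]
          have p1 : Lf k ^ (β-1) ≠ 0 := (Real.rpow_pos_of_pos hLk _).ne'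
          have p2 : Lf n ^ (β-1) ≠ 0 := hLfn.ne'
          have p3 : Lf n ^ γ ≠ 0 := (Real.rpow_pos_of_pos hLfnpos _).ne'
          field_simp
        have step3 : (Lf k / Lf n) ^ γ' ≤ 1 - m + m * (Lf k / Lf n) :=
          key_pow hx0 hx1 hγ'pos
        have step4 : B * ((1-m) + (m / Lf n) * Lf k) = B * (1 - m + m * (Lf k / Lf n)) := by
          ring
        calc (Lf k / Lf n) ^ γ * d k ≤ B * (Lf k / Lf n) ^ γ' := by rw [← step2]; exact step1
          _ ≤ B * (1 - m + m * (Lf k / Lf n)) := mul_le_mul_of_nonneg_left step3 hB0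
          _ = B * ((1-m) + (m / Lf n) * Lf k) := by ring
      have hAc : ∫ ω in {ω | I n ω = n}ᶜ, (Lf (I n ω) / Lf n) ^ γ * d (I n ω)
          ≤ ∫ ω in {ω | I n ω = n}ᶜ, B * ((1-m) + (m / Lf n) * Lf (I n ω)) :=
        setIntegral_mono_on (hint (fun k => (Lf k / Lf n) ^ γ * d k) n).integrableOn
          ((hint (fun k => B * ((1-m) + (m / Lf n) * Lf k)) n).integrableOn) hA.compl hptwise
      have hg2 : ∫ ω in {ω | I n ω = n}ᶜ, B * ((1-m) + (m / Lf n) * Lf (I n ω))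
          = B * ((1-m) * (1-p) + (m / Lf n) * TLc) := by
        rw [integral_const_mul]
        congr 1
        rw [integral_add (integrable_const _) ((hint Lf n).integrableOn.const_mul _),
          integral_const_mul, setIntegral_const, smul_eq_mul, measureReal_def, hpc, ← hTLcdef]
        ring
      -- assemble
      have hrec := Hrec n hnn₀
      have hrK : r n ≤ C * m * ε / (2 * (Lf n ^ (β-1) * Lf n)) := by
        have h1 := hN₃ n hnN₃
        have hpow : (0:ℝ) < Real.log n ^ β := Real.rpow_pos_of_pos hLnpos _
        rw [Real.norm_eq_abs, Real.norm_eq_abs, abs_of_nonneg (hr n),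
          abs_of_nonneg (by positivity : (0:ℝ) ≤ 1 / Real.log n ^ β)] at h1
        have h2 : r n ≤ |c| / Real.log n ^ β := by
          calc r n ≤ c * (1 / Real.log n ^ β) := h1
            _ ≤ |c| * (1 / Real.log n ^ β) :=
                mul_le_mul_of_nonneg_right (le_abs_self c) (by positivity)
            _ = |c| / Real.log n ^ β := by ring
        have hsplitpow : Real.log n ^ β = Real.log n ^ (β-1) * Real.log n := by
          nth_rewrite 1 [show β = (β-1) + 1 by ring]
          rw [Real.rpow_add hLnpos, Real.rpow_one]
        have hcC : |c| ≤ C * m * ε / 2 := by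
          rw [div_le_iff₀ (by positivity)] at hC1
          linarith
        rw [hsplitpow] at h2
        have hden : (0:ℝ) < Real.log n ^ (β-1) * Real.log n :=
          mul_pos (Real.rpow_pos_of_pos hLnpos _) hLnpos
        calc r n ≤ |c| / (Real.log n ^ (β-1) * Real.log n) := h2
          _ ≤ (C * m * ε / 2) / (Real.log n ^ (β-1) * Real.log n) := by gcongr
          _ = C * m * ε / (2 * (Lf n ^ (β-1) * Lf n)) := by rw [hlog]; ring
      -- final arithmetic
      have hmLf : (0:ℝ) ≤ m / Lf n := by positivity
      have h5 : (m / Lf n) * TLc ≤ (m / Lf n) * ((1-p) * Lf n - ε/2) :=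
        mul_le_mul_of_nonneg_left hTLc hmLf
      have h6 : (m / Lf n) * ((1-p) * Lf n - ε/2) = m*(1-p) - m * ε / (2 * Lf n) := by
        field_simp
      have h4 : B * ((1-m) * (1-p) + (m / Lf n) * TLc)
          ≤ B * ((1-p) - m * ε / (2 * Lf n)) := by
        refine mul_le_mul_of_nonneg_left ?_ hB0
        linarith [h5, h6]
      have hTC : ∫ ω in {ω | I n ω = n}ᶜ, (Lf (I n ω) / Lf n) ^ γ * d (I n ω)
          ≤ B * (1-p) - B * (m * ε / (2 * Lf n)) := by
        refine le_trans hAc ?_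
        rw [hg2]
        calc B * ((1-m) * (1-p) + m / Lf n * TLc)
            ≤ B * ((1-p) - m * ε / (2 * Lf n)) := h4
          _ = B * (1-p) - B * (m * ε / (2 * Lf n)) := by ring
      have hBe : B * (m * ε / (2 * Lf n)) = C * m * ε / (2 * (Lf n ^ (β-1) * Lf n)) := by
        rw [hBdef]
        field_simp
      have hfin : (1-p) * d n ≤ (1-p) * B := by
        linarith [hrec, hsplit, hA1, hTC, hrK, hBe]
      exact le_of_mul_le_mul_left hfin hq
  -- conclude the big-O bound
  rw [isBigO_iff]
  refine ⟨C, ?_⟩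
  filter_upwards [eventually_ge_atTop 2] with n hn2
  have hlog : Lf n = Real.log n := hLn n hn2
  have hLnpos : 0 < Real.log n := Real.log_pos (by exact_mod_cast (by omega : 1 < n))
  have h := main n
  rw [hlog] at h
  rw [Real.norm_eq_abs, Real.norm_eq_abs, abs_of_nonneg (hd n),
    abs_of_nonneg (by positivity : (0:ℝ) ≤ 1 / Real.log n ^ (β-1))]
  calc d n ≤ C / Real.log n ^ (β-1) := h
    _ = C * (1 / Real.log n ^ (β-1)) := by ring
end

section
/- Let η > 0, ε > 0, δ ≤ ε(η∧1)/(2(2η + (η∧1))), and let Z be a real random variable with Z ≤ 0 almost surely and E Z ≤ −ε. Then for all n large enough that 1 + (Z + δ)/ln n ≥ 0 a.s. and (1 + δ/ln n)^η ≤ 1 + 2ηδ/ln n, one has E[(1 + (Z + δ)/ln n)^η] ≤ 1 − (η∧1)ε/(2 ln n). -/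
open MeasureTheory ProbabilityTheory

theorem stmt10 {Ω : Type*} [MeasureSpace Ω] [IsProbabilityMeasure (ℙ : Measure Ω)]
    (η ε δ : ℝ) (hη : 0 < η) (hε : 0 < ε) (hδ0 : 0 < δ)
    (hδ : δ ≤ ε * min η 1 / (2 * (2 * η + min η 1)))
    (Z : Ω → ℝ) (hZmeas : Measurable Z) (hZint : Integrable Z ℙ)
    (hZneg : ∀ᵐ ω ∂ℙ, Z ω ≤ 0) (hZmean : ∫ ω, Z ω ≤ -ε)
    (n : ℕ) (hlog : 0 < Real.log n)
    (hpos : ∀ᵐ ω ∂ℙ, 0 ≤ 1 + (Z ω + δ) / Real.log n)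
    (hbern : (1 + δ / Real.log n) ^ η ≤ 1 + 2 * η * δ / Real.log n) :
    ∫ ω, (1 + (Z ω + δ) / Real.log n) ^ η ≤ 1 - min η 1 * ε / (2 * Real.log n) := by
  set L := Real.log n with hL
  set m := min η 1 with hm
  have hm0 : 0 < m := lt_min hη one_pos
  have hm1 : m ≤ 1 := min_le_right _ _
  have hmη : m ≤ η := min_le_left _ _
  -- integrability of min (Z + δ) 0
  have hmin_int : Integrable (fun ω => min (Z ω + δ) 0) ℙ := by
    have h := (hZint.add (integrable_const δ)).inf (integrable_const (0 : ℝ))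
    apply h.congr
    filter_upwards with ω
    rfl
  -- the dominating function
  set g : Ω → ℝ := fun ω => 1 + 2 * η * δ / L + m / L * min (Z ω + δ) 0 with hg
  have hgint : Integrable g ℙ :=
    (integrable_const _).add (hmin_int.const_mul (m / L))
  -- pointwise bound
  have hptwise : ∀ᵐ ω ∂ℙ, (1 + (Z ω + δ) / L) ^ η ≤ g ω := by
    filter_upwards [hZneg, hpos] with ω hω1 hω2
    rcases le_or_gt (-δ) (Z ω) with hcase | hcase
    · -- Z ω ≥ -δ : base ≤ 1 + δ/L
      have hb : (1 + (Z ω + δ) / L) ^ η ≤ (1 + δ / L) ^ η := by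
        apply Real.rpow_le_rpow hω2 _ hη.le
        have : (Z ω + δ) / L ≤ δ / L := by gcongr <;> linarith [hlog.le]
        linarith
      have hmin : min (Z ω + δ) 0 = 0 := min_eq_right (by linarith)
      simp only [hg, hmin, mul_zero, add_zero]
      exact hb.trans hbern
    · -- Z ω < -δ : base ≤ 1
      have hbase1 : 1 + (Z ω + δ) / L ≤ 1 := by
        have : (Z ω + δ) / L ≤ 0 := div_nonpos_of_nonpos_of_nonneg (by linarith) hlog.le
        linarith
      have step1 : (1 + (Z ω + δ) / L) ^ η ≤ (1 + (Z ω + δ) / L) ^ m :=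
        Real.rpow_le_rpow_of_exponent_ge' hω2 hbase1 hm0.le hmη
      have step2 : (1 + (Z ω + δ) / L) ^ m ≤ 1 + m * ((Z ω + δ) / L) :=
        rpow_one_add_le_one_add_mul_self (by linarith) hm0.le hm1
      have hmin : min (Z ω + δ) 0 = Z ω + δ := min_eq_left (by linarith)
      have hδL : 0 ≤ 2 * η * δ / L := by positivity
      have heq : m * ((Z ω + δ) / L) = m / L * min (Z ω + δ) 0 := by rw [hmin]; ring
      simp only [hg]
      calc (1 + (Z ω + δ) / L) ^ η ≤ 1 + m * ((Z ω + δ) / L) := step1.trans step2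
        _ = 1 + m / L * min (Z ω + δ) 0 := by rw [heq]
        _ ≤ 1 + 2 * η * δ / L + m / L * min (Z ω + δ) 0 := by linarith
  -- integrability of the integrand
  have hXmeas : AEStronglyMeasurable (fun ω => (1 + (Z ω + δ) / L) ^ η) ℙ := by
    apply Measurable.aestronglyMeasurable
    fun_prop
  have hXint : Integrable (fun ω => (1 + (Z ω + δ) / L) ^ η) ℙ := by
    apply Integrable.mono' (g := fun _ => (1 + δ / L) ^ η) (integrable_const _) hXmeas
    filter_upwards [hZneg, hpos] with ω hω1 hω2
    rw [Real.norm_eq_abs, abs_of_nonneg (Real.rpow_nonneg hω2 _)]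
    apply Real.rpow_le_rpow hω2 _ hη.le
    have : (Z ω + δ) / L ≤ δ / L := by gcongr <;> linarith [hlog.le]
    linarith
  -- combine
  have hIle : ∫ ω, (1 + (Z ω + δ) / L) ^ η ≤ ∫ ω, g ω :=
    integral_mono_ae hXint hgint hptwise
  have hminle : ∫ ω, min (Z ω + δ) 0 ≤ ∫ ω, (Z ω + δ) := by
    apply integral_mono hmin_int (hZint.add (integrable_const δ))
    intro ω; exact min_le_left _ _
  have hZδ : ∫ ω, (Z ω + δ) = (∫ ω, Z ω) + δ := by
    rw [integral_add hZint (integrable_const δ), integral_const]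
    simp
  set I := ∫ ω, min (Z ω + δ) 0 with hI
  have hIg : ∫ ω, g ω = 1 + 2 * η * δ / L + m / L * I := by
    simp only [hg]
    rw [integral_add (integrable_const _) (hmin_int.const_mul (m / L)),
      integral_const, integral_const_mul]
    simp
    left; rfl
  have hmean' : I ≤ -ε + δ := by rw [hZδ] at hminle; linarith
  rw [hIg] at hIle
  -- the arithmetic
  have hA : (2 * η + m) * δ ≤ ε * m / 2 := by
    rw [le_div_iff₀ (by positivity)] at hδ
    nlinarith
  have hnum : 2 * η * δ + m * I + m * ε / 2 ≤ 0 := by nlinarith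
  have hkey : 2 * η * δ / L + m / L * I + m * ε / (2 * L) ≤ 0 := by
    have heq : 2 * η * δ / L + m / L * I + m * ε / (2 * L)
        = (2 * η * δ + m * I + m * ε / 2) / L := by
      field_simp
    rw [heq]
    exact div_nonpos_of_nonpos_of_nonneg hnum hlog.le
  linarith
end

section
/- Let I_n have distribution P(I_n = 0) = 1/n and P(I_n = k) = 2k/n² for 1 ≤ k ≤ n−1 (n ≥ 2). Then E[ln((I_n ∨ 1)/n)] → E ln √U = −1/2 as n → ∞, where U ~ unif[0,1]. -/
open MeasureTheory ProbabilityTheory Filter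
open scoped ENNReal Topology Real


noncomputable def Aux (t : ℝ) : ℝ := t^2/2 * Real.log t - t^2/4 + 1/4

lemma hasDeriv (x : ℝ) (hx : 0 < x) :
    HasDerivAt (fun t => t^2/2 * Real.log t - t^2/4 + 1/4) (x * Real.log x) x := by
  have h1 : HasDerivAt (fun t : ℝ => t^2/2) x x := by
    simpa using ((hasDerivAt_pow 2 x).div_const 2)
  have h2 : HasDerivAt Real.log x⁻¹ x := Real.hasDerivAt_log hx.ne'
  have h3 := (h1.mul h2)
  have h4 : HasDerivAt (fun t : ℝ => t^2/4) (x/2) x := by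
    have := (hasDerivAt_pow 2 x).div_const 4
    simpa [pow_one] using this.congr_deriv (by ring)
  have : HasDerivAt (fun t => t^2/2 * Real.log t - t^2/4 + 1/4) _ x := (h3.sub h4).add_const (1/4)
  refine this.congr_deriv ?_
  field_simp
  ring

lemma integral_xlogx {t : ℝ} (ht : 1 ≤ t) :
    ∫ x in (1:ℝ)..t, x * Real.log x = Aux t := by
  have h : ∀ x ∈ Set.uIcc (1:ℝ) t, HasDerivAt (fun t => t^2/2 * Real.log t - t^2/4 + 1/4) (x * Real.log x) x := by
    intro x hx
    rw [Set.uIcc_of_le ht] at hx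
    exact hasDeriv x (lt_of_lt_of_le one_pos hx.1)
  have hint : IntervalIntegrable (fun x => x * Real.log x) MeasureTheory.volume 1 t := by
    apply ContinuousOn.intervalIntegrable
    apply continuousOn_id.mul
    apply Real.continuousOn_log.mono
    intro x hx
    rw [Set.uIcc_of_le ht] at hx
    exact ne_of_gt (lt_of_lt_of_le one_pos hx.1)
  rw [intervalIntegral.integral_eq_sub_of_hasDerivAt h hint]
  simp [Aux]

lemma mono_xlogx : MonotoneOn (fun x => x * Real.log x) (Set.Ici 1) := by
  intro a ha b hb hab
  simp only [Set.mem_Ici] at ha hb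
  have h1 : Real.log a ≤ Real.log b := Real.log_le_log (by linarith) hab
  have h2 : 0 ≤ Real.log a := Real.log_nonneg ha
  exact mul_le_mul hab h1 h2 (by linarith)

noncomputable def Lsum (n : ℕ) : ℝ := ∑ k ∈ Finset.range n, (k:ℝ) * Real.log k

lemma Lsum_le (n : ℕ) (hn : 1 ≤ n) : Lsum n ≤ Aux n := by
  have key := MonotoneOn.sum_le_integral (x₀ := 1) (a := n-1)
    (f := fun x => x * Real.log x)
    (mono_xlogx.mono (Set.Icc_subset_Ici_self))
  have hc : (1:ℝ) + ((n-1:ℕ):ℝ) = n := by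
    have : ((n-1:ℕ):ℝ) = (n:ℝ) - 1 := by
      rw [Nat.cast_sub hn]; simp
    rw [this]; ring
  rw [hc, integral_xlogx (by exact_mod_cast hn)] at key
  refine le_trans (le_of_eq ?_) key
  rw [Lsum]
  have hn' : n = (n-1) + 1 := by omega
  rw [hn', Finset.sum_range_succ']
  simp only [Nat.cast_zero, Real.log_zero, mul_zero, add_zero]
  apply Finset.sum_congr rfl
  intro i _
  push_cast
  ring_nf

lemma le_Lsum (n : ℕ) (hn : 2 ≤ n) : Aux (n-1:ℕ) ≤ Lsum n := by
  have key := MonotoneOn.integral_le_sum (x₀ := 1) (a := n-2)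
    (f := fun x => x * Real.log x)
    (mono_xlogx.mono (Set.Icc_subset_Ici_self))
  have hc : (1:ℝ) + ((n-2:ℕ):ℝ) = ((n-1:ℕ):ℝ) := by
    rw [Nat.cast_sub (by omega), Nat.cast_sub (by omega)]; push_cast; ring
  have h1 : (1:ℝ) ≤ ((n-1:ℕ):ℝ) := by
    have : 1 ≤ n - 1 := by omega
    exact_mod_cast this
  rw [hc, integral_xlogx h1] at key
  refine le_trans key (le_of_eq ?_)
  rw [Lsum]
  have hn' : n = ((n-2) + 1) + 1 := by omega
  rw [hn', Finset.sum_range_succ', Finset.sum_range_succ']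
  simp only [Nat.cast_zero, Real.log_zero, mul_zero, add_zero, Nat.cast_one,
    Real.log_one, mul_zero, zero_add]
  rw [show n-2+1+1-2 = n-2 from by omega]
  apply Finset.sum_congr rfl
  intro i _
  push_cast
  ring_nf

noncomputable def Ssum (n : ℕ) : ℝ :=
  ∑ k ∈ Finset.range n, (2*(k:ℝ)/(n:ℝ)^2) * Real.log ((k:ℝ)/(n:ℝ))

lemma Ssum_eq (n : ℕ) (hn : 1 ≤ n) :
    Ssum n = 2/(n:ℝ)^2 * Lsum n - ((n:ℝ)-1)/(n:ℝ) * Real.log n := by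
  have hn0 : (n:ℝ) ≠ 0 := Nat.cast_ne_zero.2 (by omega)
  have gauss : ∑ k ∈ Finset.range n, (k:ℝ) = n*((n:ℝ)-1)/2 := by
    clear hn hn0
    induction n with
    | zero => simp
    | succ m ih => rw [Finset.sum_range_succ, ih]; push_cast; ring
  have hterm : ∀ k ∈ Finset.range n, (2*(k:ℝ)/(n:ℝ)^2) * Real.log ((k:ℝ)/(n:ℝ)) =
      2/(n:ℝ)^2 * ((k:ℝ)*Real.log k) - (2*Real.log n/(n:ℝ)^2) * (k:ℝ) := by
    intro k _
    rcases Nat.eq_zero_or_pos k with rfl | hk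
    · simp
    · rw [Real.log_div (Nat.cast_ne_zero.2 (by omega)) hn0]; ring
  rw [Ssum, Finset.sum_congr rfl hterm, Finset.sum_sub_distrib, ← Finset.mul_sum,
    ← Finset.mul_sum, gauss, Lsum]
  field_simp

lemma tendsto_log_div : Tendsto (fun n : ℕ => Real.log n / n) atTop (𝓝 0) := by
  have h := (Real.tendsto_pow_log_div_mul_add_atTop 1 0 1 one_ne_zero).comp
    tendsto_natCast_atTop_atTop
  simpa [Function.comp_def] using h

lemma tendsto_inv_sq : Tendsto (fun n : ℕ => 1/(2*(n:ℝ)^2)) atTop (𝓝 0) := by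
  apply Tendsto.div_atTop (tendsto_const_nhds)
  exact (tendsto_const_mul_atTop_of_pos two_pos).2
    ((tendsto_pow_atTop two_ne_zero).comp tendsto_natCast_atTop_atTop)

lemma tendsto_one_div_nat : Tendsto (fun n : ℕ => 1/(n:ℝ)) atTop (𝓝 0) :=
  tendsto_one_div_atTop_nhds_zero_nat

lemma tendsto_log_sub : Tendsto (fun n : ℕ => Real.log ((n:ℝ)-1) - Real.log n) atTop (𝓝 0) := by
  have h := (Real.tendsto_log_nat_add_one_sub_log.comp (tendsto_sub_atTop_nat 1)).neg
  rw [neg_zero] at h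
  apply h.congr'
  filter_upwards [eventually_ge_atTop 1] with n hn
  have hc : ((n-1:ℕ):ℝ) = (n:ℝ) - 1 := by rw [Nat.cast_sub hn]; simp
  simp only [Function.comp_apply, hc]
  have : ((n:ℝ) - 1) + 1 = (n:ℝ) := by ring
  rw [this]; ring

lemma Ssum_tendsto : Tendsto (fun n : ℕ => Ssum n) atTop (𝓝 (-(1/2))) := by
  set u : ℕ → ℝ := fun n => -(1/2) + Real.log n / n + 1/(2*(n:ℝ)^2) with hu
  set l : ℕ → ℝ := fun n => (1-1/(n:ℝ))^2 * (Real.log ((n:ℝ)-1) - Real.log n)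
      - (Real.log n/(n:ℝ)) * (1 - 1/(n:ℝ)) - (1-1/(n:ℝ))^2/2 + 1/(2*(n:ℝ)^2) with hl
  have hone : Tendsto (fun n : ℕ => 1 - 1/(n:ℝ)) atTop (𝓝 1) := by
    simpa using tendsto_one_div_nat.const_sub (1:ℝ)
  have hut : Tendsto u atTop (𝓝 (-(1/2))) := by
    have := (tendsto_log_div.const_add (-(1/2):ℝ)).add tendsto_inv_sq
    simpa [hu] using this
  have hlt : Tendsto l atTop (𝓝 (-(1/2))) := by
    have h1 := ((hone.pow 2).mul tendsto_log_sub).sub (tendsto_log_div.mul hone)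
    have h2 := (h1.sub ((hone.pow 2).div_const 2)).add tendsto_inv_sq
    rw [hl, show (-(1/2):ℝ) = ((1:ℝ)^2*0 - 0*1 - (1:ℝ)^2/2) + 0 by norm_num]
    exact h2
  apply tendsto_of_tendsto_of_tendsto_of_le_of_le' hlt hut
  · filter_upwards [eventually_ge_atTop 2] with n hn
    have hn0 : (n:ℝ) ≠ 0 := Nat.cast_ne_zero.2 (by omega)
    have hc : ((n-1:ℕ):ℝ) = (n:ℝ) - 1 := by rw [Nat.cast_sub (by omega)]; simp
    have hb := le_Lsum n hn
    have hpos : (0:ℝ) < 2/(n:ℝ)^2 := by positivity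
    have := mul_le_mul_of_nonneg_left hb hpos.le
    rw [Ssum_eq n (by omega)]
    have hL : l n = 2/(n:ℝ)^2 * Aux ((n-1:ℕ)) - ((n:ℝ)-1)/(n:ℝ) * Real.log n := by
      rw [hl, Aux, hc]
      field_simp
      ring
    rw [hL]
    linarith
  · filter_upwards [eventually_ge_atTop 2] with n hn
    have hn0 : (n:ℝ) ≠ 0 := Nat.cast_ne_zero.2 (by omega)
    have hb := Lsum_le n (by omega)
    have hpos : (0:ℝ) < 2/(n:ℝ)^2 := by positivity
    have := mul_le_mul_of_nonneg_left hb hpos.le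
    rw [Ssum_eq n (by omega)]
    have hU : u n = 2/(n:ℝ)^2 * Aux n - ((n:ℝ)-1)/(n:ℝ) * Real.log n := by
      rw [hu, Aux]
      field_simp
      ring
    rw [hU]
    linarith

theorem stmt17 {Ω : Type*} [MeasureSpace Ω] [IsProbabilityMeasure (ℙ : Measure Ω)]
    (I : ℕ → Ω → ℕ) (hmeas : ∀ n, Measurable (I n))
    (h0 : ∀ n, 2 ≤ n → ℙ {ω | I n ω = 0} = (n : ℝ≥0∞)⁻¹)
    (hk : ∀ n, 2 ≤ n → ∀ k, 1 ≤ k → k ≤ n - 1 →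
      ℙ {ω | I n ω = k} = 2 * k / (n : ℝ≥0∞) ^ 2)
    (hsupp : ∀ n ω, 2 ≤ n → I n ω ≤ n - 1) :
    Tendsto (fun n => ∫ ω, Real.log ((max (I n ω) 1 : ℝ) / n)) atTop
      (nhds (-(1 / 2))) := by
  have key : ∀ n, 2 ≤ n →
      (∫ ω, Real.log ((max (I n ω) 1 : ℝ) / n)) = -(Real.log n / n) + Ssum n := by
    intro n hn
    have hms : ∀ k : ℕ, MeasurableSet {ω | I n ω = k} := fun k =>
      hmeas n (measurableSet_singleton k)
    have hfun : (fun ω => Real.log ((max (I n ω) 1 : ℝ) / n)) =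
        fun ω => ∑ k ∈ Finset.range n,
          Set.indicator {ω' | I n ω' = k} (fun _ => Real.log ((max (k:ℕ) 1 : ℝ) / n)) ω := by
      funext ω
      rw [Finset.sum_eq_single (I n ω)]
      · rw [Set.indicator_of_mem (by exact rfl)]
      · intro b _ hb
        exact (Set.indicator_of_notMem (s := {ω' | I n ω' = b}) (fun h => hb (Eq.symm h)) _)
      · intro h
        exact absurd (Finset.mem_range.2 (by have := hsupp n ω hn; omega)) h
    rw [hfun, integral_finset_sum _ (fun k _ =>
      (integrable_const _).indicator (hms k))]
    simp_rw [integral_indicator_const _ (hms _), smul_eq_mul]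
    have hn' : n = (n-1) + 1 := by omega
    rw [hn', Finset.sum_range_succ']
    rw [← hn']
    have h0' : Measure.real ℙ {ω | I n ω = 0} * Real.log ((max (0:ℕ) 1 : ℝ) / n)
        = -(Real.log n / n) := by
      rw [measureReal_def, h0 n hn]
      have : ((max (0:ℕ) 1 : ℝ) / n) = (n:ℝ)⁻¹ := by norm_num
      rw [this, Real.log_inv, ENNReal.toReal_inv, ENNReal.toReal_natCast]
      field_simp
    rw [h0', Ssum, hn', Finset.sum_range_succ', ← hn']
    simp only [Nat.cast_zero, zero_div, mul_zero, zero_mul, add_zero]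
    rw [add_comm]
    congr 1
    apply Finset.sum_congr rfl
    intro i hi
    have hi' : i + 1 ≤ n - 1 := by
      have := Finset.mem_range.1 hi; omega
    rw [measureReal_def, hk n hn (i+1) (by omega) hi']
    have hmax : (max ((i+1:ℕ)) 1 : ℝ) = ((i+1:ℕ):ℝ) := by
      rw [max_eq_left]
      exact_mod_cast Nat.one_le_iff_ne_zero.2 (by omega)
    have htr : ((2 * ((i+1:ℕ):ℝ≥0∞) / (n : ℝ≥0∞) ^ 2)).toReal = 2 * ((i+1:ℕ):ℝ) / (n:ℝ)^2 := by
      rw [ENNReal.toReal_div, ENNReal.toReal_mul, ENNReal.toReal_pow,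
        ENNReal.toReal_natCast, ENNReal.toReal_natCast, ENNReal.toReal_ofNat]
    rw [htr, hmax]
  have hfinal : Tendsto (fun n : ℕ => -(Real.log n / n) + Ssum n) atTop (𝓝 (-(1/2))) := by
    have := tendsto_log_div.neg.add Ssum_tendsto
    simpa using this
  apply hfinal.congr'
  filter_upwards [eventually_ge_atTop 2] with n hn
  exact (key n hn).symm
end
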